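/- Let A be a positive normalized linear functional on L, let f ∈ C^n([a,b]) be n-convex, let 3 ≤ m ≤ n−1 with n and m of different parity, and let g ∈ L with f∘g ∈ L. Then LR(f,g,a,b,A) ≤ (A(g)−a)·(f[a,a] − f[a,b]) + Σ_{k=2}^{m-1} (f^{(k)}(a)/k!) · A[(g−a1)^k] + Σ_{k=1}^{n-m} f[a,…,a (m times); b,…,b (k times)] · A[(g−a1)^m (g−b1)^{k−1}]. If instead f is n-convex and n, m have equal parity, the inequality is reversed. -/

import Mathlib

/-- Divided difference of `f` at a (sorted) list of points, with repeated points
handled via derivatives (taken within the set `s`). -/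
noncomputable def divDiff (s : Set ℝ) (f : ℝ → ℝ) : List ℝ → ℝ
  | [] => 0
  | [x] => f x
  | x :: y :: l =>
    if x = (y :: l).getLast (List.cons_ne_nil y l) then
      iteratedDerivWithin (l.length + 1) f s x / Nat.factorial (l.length + 1)
    else
      (divDiff s f (y :: l) - divDiff s f (x :: (y :: l).dropLast)) /
        ((y :: l).getLast (List.cons_ne_nil y l) - x)
termination_by l => l.length
decreasing_by
  all_goals simp [List.length_dropLast]

open Set

lemma contDiff_sub_pow (c : ℝ) (i : ℕ) : ContDiff ℝ ⊤ (fun x : ℝ => (x - c)^i) :=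
  (contDiff_id.sub contDiff_const).pow i

lemma deriv_sub_pow (c : ℝ) (i : ℕ) :
    deriv (fun x : ℝ => (x - c)^i) = fun x => (i : ℝ) * (x - c)^(i-1) := by
  funext x
  have h : HasDerivAt (fun x : ℝ => (x - c)^i) ((i:ℝ) * (x - c)^(i-1) * 1) x :=
    ((hasDerivAt_id x).sub_const c).pow i
  simpa using h.deriv

lemma iD_const_mul (j : ℕ) (c : ℝ) {f : ℝ → ℝ} (hf : ContDiff ℝ ⊤ f) :
    iteratedDeriv j (fun x => c * f x) = fun x => c * iteratedDeriv j f x := by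
  funext x
  rw [← iteratedDerivWithin_univ]
  rw [show (fun x => c * f x) = (fun x => c * f x) from rfl]
  rw [iteratedDerivWithin_const_mul (mem_univ x) uniqueDiffOn_univ c (hf.of_le le_top).contDiffWithinAt]
  rw [iteratedDerivWithin_univ]

lemma iD_monomial (i j : ℕ) (c : ℝ) :
    iteratedDeriv j (fun x : ℝ => (x - c)^i) = fun x => (i.descFactorial j : ℝ) * (x - c)^(i-j) := by
  induction j generalizing i with
  | zero => simp [iteratedDeriv_zero]
  | succ j ih =>
    rw [iteratedDeriv_succ', deriv_sub_pow]
    rw [iD_const_mul j (i:ℝ) (contDiff_sub_pow c (i-1))]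
    rw [ih (i-1)]
    funext x
    rcases Nat.eq_zero_or_pos i with h0 | h0
    · subst h0; simp
    · have : i - 1 - j = i - (j+1) := by omega
      rw [this]
      have : (i.descFactorial (j+1) : ℝ) = (i : ℝ) * ((i-1).descFactorial j : ℝ) := by
        obtain ⟨i', rfl⟩ := Nat.exists_eq_succ_of_ne_zero h0.ne'
        rw [Nat.succ_descFactorial_succ]
        push_cast
        simp
      rw [this]; ring

lemma iD_zero_fun (j : ℕ) : iteratedDeriv j (fun _ : ℝ => (0:ℝ)) = fun _ => 0 := by
  induction j with
  | zero => simp [iteratedDeriv_zero]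
  | succ j ih =>
    rw [iteratedDeriv_succ', show deriv (fun _ : ℝ => (0:ℝ)) = fun _ => (0:ℝ) by
      funext x; simp, ih]

lemma iD_add {f g : ℝ → ℝ} (j : ℕ) (hf : ContDiff ℝ ⊤ f) (hg : ContDiff ℝ ⊤ g) :
    iteratedDeriv j (fun x => f x + g x) = fun x => iteratedDeriv j f x + iteratedDeriv j g x := by
  funext x
  rw [← iteratedDerivWithin_univ]
  have h := iteratedDerivWithin_add (mem_univ x) uniqueDiffOn_univ
    ((hf.of_le le_top).contDiffWithinAt (n := j)) ((hg.of_le le_top).contDiffWithinAt (n := j))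
  have : (fun x => f x + g x) = f + g := rfl
  rw [this]
  rw [h]
  rw [iteratedDerivWithin_univ, iteratedDerivWithin_univ]

lemma iD_fun_sum {ι : Type*} (s : Finset ι) (F : ι → ℝ → ℝ)
    (hF : ∀ i ∈ s, ContDiff ℝ ⊤ (F i)) (j : ℕ) :
    iteratedDeriv j (fun x => ∑ i ∈ s, F i x) = fun x => ∑ i ∈ s, iteratedDeriv j (F i) x := by
  classical
  induction s using Finset.induction_on with
  | empty => simpa using iD_zero_fun j
  | insert c t hnot ih =>
    have hFc : ContDiff ℝ ⊤ (F c) := hF c (Finset.mem_insert_self c t)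
    have hFt : ∀ i ∈ t, ContDiff ℝ ⊤ (F i) := fun i hi => hF i (Finset.mem_insert_of_mem hi)
    have hsum : ContDiff ℝ ⊤ (fun x => ∑ i ∈ t, F i x) := by
      apply ContDiff.sum; intro i hi; exact hFt i hi
    have : (fun x => ∑ i ∈ insert c t, F i x) = fun x => F c x + ∑ i ∈ t, F i x := by
      funext x; rw [Finset.sum_insert hnot]
    rw [this, iD_add j hFc hsum, ih hFt]
    funext x; rw [Finset.sum_insert hnot]

lemma contDiff_phi (a b : ℝ) (p r : ℕ) :
    ContDiff ℝ ⊤ (fun x : ℝ => (x - a)^p * (x - b)^r) :=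
  (contDiff_sub_pow a p).mul (contDiff_sub_pow b r)

lemma phi_expand (a b : ℝ) (p r : ℕ) :
    (fun x : ℝ => (x - a)^p * (x - b)^r)
      = fun x => ∑ i ∈ Finset.range (r+1), ((r.choose i : ℝ) * (a - b)^(r-i)) * (x - a)^(p+i) := by
  funext x
  have h : (x - b) = (x - a) + (a - b) := by ring
  rw [h, add_pow, Finset.mul_sum]
  apply Finset.sum_congr rfl
  intro i _
  rw [pow_add]; ring

lemma iD_phi (a b : ℝ) (p r j : ℕ) :
    iteratedDeriv j (fun x : ℝ => (x - a)^p * (x - b)^r)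
      = fun x => ∑ i ∈ Finset.range (r+1),
          ((r.choose i : ℝ) * (a - b)^(r-i)) * (((p+i).descFactorial j : ℝ) * (x - a)^(p+i-j)) := by
  rw [phi_expand]
  rw [iD_fun_sum _ _ (fun i _ => (contDiff_const.mul (contDiff_sub_pow a (p+i)))) j]
  funext x
  apply Finset.sum_congr rfl
  intro i _
  rw [iD_const_mul j _ (contDiff_sub_pow a (p+i)), iD_monomial]

lemma iD_phi_left (a b : ℝ) (p r j : ℕ) (hj : j < p) :
    iteratedDeriv j (fun x : ℝ => (x - a)^p * (x - b)^r) a = 0 := by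
  rw [iD_phi]
  apply Finset.sum_eq_zero
  intro i _
  have h1 : p + i - j ≠ 0 := by omega
  rw [sub_self, zero_pow h1]
  ring

lemma iD_phi_right (a b : ℝ) (p r j : ℕ) (hj : j < r) :
    iteratedDeriv j (fun x : ℝ => (x - a)^p * (x - b)^r) b = 0 := by
  have h : (fun x : ℝ => (x - a)^p * (x - b)^r) = (fun x : ℝ => (x - b)^r * (x - a)^p) := by
    funext x; ring
  rw [h]
  exact iD_phi_left b a r p j hj

lemma iD_phi_gt (a b : ℝ) (p r j : ℕ) (hj : p + r < j) :
    iteratedDeriv j (fun x : ℝ => (x - a)^p * (x - b)^r) = fun _ => 0 := by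
  rw [iD_phi]
  funext x
  apply Finset.sum_eq_zero
  intro i hi
  have : (p+i).descFactorial j = 0 := by
    apply Nat.descFactorial_eq_zero_iff_lt.mpr
    simp at hi; omega
  rw [this]
  push_cast; ring

lemma iD_phi_top (a b : ℝ) (p r : ℕ) :
    iteratedDeriv (p+r) (fun x : ℝ => (x - a)^p * (x - b)^r)
      = fun _ => ((p+r).factorial : ℝ) := by
  rw [iD_phi]
  funext x
  rw [Finset.sum_eq_single r]
  · simp [Nat.descFactorial_self]
  · intro i hi hne
    have : (p+i).descFactorial (p+r) = 0 := by
      apply Nat.descFactorial_eq_zero_iff_lt.mpr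
      simp at hi; omega
    rw [this]; push_cast; ring
  · intro h; simp at h

lemma iDW_eq_iD {Q : ℝ → ℝ} (hQ : ContDiff ℝ ⊤ Q) {s : Set ℝ} (hs : UniqueDiffOn ℝ s)
    (j : ℕ) : ∀ x ∈ s, iteratedDerivWithin j Q s x = iteratedDeriv j Q x := by
  induction j with
  | zero => simp
  | succ j ih =>
    intro x hx
    rw [iteratedDerivWithin_succ, iteratedDeriv_succ]
    rw [derivWithin_congr ih (ih x hx)]
    refine DifferentiableAt.derivWithin ?_ (hs.uniqueDiffWithinAt hx)
    exact (hQ.differentiable_iteratedDeriv j (by simp)).differentiableAt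

lemma iDW_sub_poly {f Q : ℝ → ℝ} {s : Set ℝ} (hs : UniqueDiffOn ℝ s) {n : ℕ}
    (hf : ContDiffOn ℝ n f s) (hQ : ContDiff ℝ ⊤ Q) (j : ℕ) (hj : j ≤ n) :
    ∀ x ∈ s, iteratedDerivWithin j (fun y => f y - Q y) s x
      = iteratedDerivWithin j f s x - iteratedDeriv j Q x := by
  intro x hx
  have h1 : (fun y => f y - Q y) = f - Q := rfl
  rw [h1, iteratedDerivWithin_sub hx hs ((hf.of_le (by exact_mod_cast hj)) x hx)
    ((hQ.of_le le_top).contDiffWithinAt), iDW_eq_iD hQ hs j x hx]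

lemma rolleList {a b : ℝ} {e : ℝ → ℝ} (hcont : ContinuousOn e (Set.Icc a b)) :
    ∀ (L : List ℝ) (u : ℝ), (u :: L).Chain' (· < ·) →
      (∀ x ∈ (u :: L), x ∈ Set.Icc a b) → (∀ x ∈ (u :: L), e x = 0) →
      ∃ l' : List ℝ, l'.length = L.length ∧ l'.Chain' (· < ·) ∧
        (∀ y ∈ l', u < y ∧ y ∈ Set.Ioo a b ∧ deriv e y = 0) := by
  intro L
  induction L with
  | nil => intro u _ _ _; exact ⟨[], rfl, List.isChain_nil, by simp⟩
  | cons v rest ih =>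
    intro u hchain hmem hz
    have huv : u < v := (List.isChain_cons_cons.mp hchain).1
    have hchain' : (v :: rest).Chain' (· < ·) := (List.isChain_cons_cons.mp hchain).2
    have hmem' : ∀ x ∈ (v :: rest), x ∈ Set.Icc a b := fun x hx =>
      hmem x (List.mem_cons_of_mem u hx)
    have hz' : ∀ x ∈ (v :: rest), e x = 0 := fun x hx => hz x (List.mem_cons_of_mem u hx)
    obtain ⟨l'', hlen, hch, hprop⟩ := ih v hchain' hmem' hz'
    have hua : a ≤ u := (hmem u (List.mem_cons_self (a := u))).1
    have hvb : v ≤ b := (hmem' v (List.mem_cons_self (a := v))).2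
    have hsub : Set.Icc u v ⊆ Set.Icc a b := Set.Icc_subset_Icc hua hvb
    obtain ⟨y, hy, hy0⟩ := exists_deriv_eq_zero huv (hcont.mono hsub)
      (by rw [hz u (List.mem_cons_self (a := u)), hz v (List.mem_cons_of_mem u (List.mem_cons_self (a := v)))])
    refine ⟨y :: l'', by simp [hlen], ?_, ?_⟩
    · apply List.isChain_cons.mpr
      refine ⟨?_, hch⟩
      intro z hz''
      have : z ∈ l'' := by
        cases l'' with
        | nil => simp at hz''
        | cons w t => simp at hz''; subst hz''; exact List.mem_cons_self
      exact lt_trans hy.2 (hprop z this).1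
    · intro z hz''
      rcases List.mem_cons.mp hz'' with rfl | hz''
      · exact ⟨hy.1, ⟨lt_of_le_of_lt hua hy.1, lt_of_lt_of_le hy.2 hvb⟩, hy0⟩
      · obtain ⟨h1, h2, h3⟩ := hprop z hz''
        exact ⟨lt_trans huv h1, h2, h3⟩

lemma rolle_config {a b : ℝ} (hab : a < b) :
    ∀ (n : ℕ) (e : ℝ → ℝ), ContDiffOn ℝ n e (Set.Icc a b) →
    ∀ (i j : ℕ) (l : List ℝ), l.Chain' (· < ·) → (∀ x ∈ l, x ∈ Set.Ioo a b) →
      i + l.length + j = n + 1 →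
      (∀ j' < i, iteratedDerivWithin j' e (Set.Icc a b) a = 0) →
      (∀ x ∈ l, e x = 0) →
      (∀ j' < j, iteratedDerivWithin j' e (Set.Icc a b) b = 0) →
      ∃ ξ ∈ Set.Icc a b, iteratedDerivWithin n e (Set.Icc a b) ξ = 0 := by
  intro n
  induction n with
  | zero =>
    intro e _ i j l hch hIoo hcount ha hl hb
    rcases Nat.eq_zero_or_pos i with hi | hi
    · rcases Nat.eq_zero_or_pos j with hj | hj
      · match l, (by omega : l.length = 1) with
        | [x], _ =>
          exact ⟨x, Set.Ioo_subset_Icc_self (hIoo x (List.mem_cons_self (a := x))),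
            by simpa using hl x (List.mem_cons_self (a := x))⟩
      · exact ⟨b, Set.right_mem_Icc.mpr hab.le, by simpa using hb 0 (by omega)⟩
    · exact ⟨a, Set.left_mem_Icc.mpr hab.le, by simpa using ha 0 (by omega)⟩
  | succ n IH =>
    intro e hcd i j l hch hIoo hcount ha hl hb
    have huniq : UniqueDiffOn ℝ (Set.Icc a b) := uniqueDiffOn_Icc hab
    have hamem : a ∈ Set.Icc a b := Set.left_mem_Icc.mpr hab.le
    have hbmem : b ∈ Set.Icc a b := Set.right_mem_Icc.mpr hab.le
    have hcont : ContinuousOn e (Set.Icc a b) := hcd.continuousOn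
    set e' := derivWithin e (Set.Icc a b) with he'
    have hcd' : ContDiffOn ℝ n e' (Set.Icc a b) := by
      apply hcd.derivWithin huniq
      exact_mod_cast le_refl ((n:ℕ∞) + 1)
    -- build full zero list
    set L : List ℝ := (if 0 < i then [a] else []) ++ l ++ (if 0 < j then [b] else []) with hL
    have hLmem : ∀ x ∈ L, x ∈ Set.Icc a b := by
      intro x hx
      rw [hL] at hx
      simp only [List.mem_append] at hx
      rcases hx with (hx | hx) | hx
      · split at hx <;> simp at hx; subst hx; exact hamem
      · exact Set.Ioo_subset_Icc_self (hIoo x hx)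
      · split at hx <;> simp at hx; subst hx; exact hbmem
    have hLz : ∀ x ∈ L, e x = 0 := by
      intro x hx
      rw [hL] at hx
      simp only [List.mem_append] at hx
      rcases hx with (hx | hx) | hx
      · split at hx <;> rename_i hi <;> simp at hx
        subst hx; have := ha 0 hi; simpa using this
      · exact hl x hx
      · split at hx <;> rename_i hj <;> simp at hx
        subst hx; have := hb 0 hj; simpa using this
    have hLch : L.Chain' (· < ·) := by
      refine List.isChain_iff_pairwise.mpr ?_
      rw [hL]
      apply List.pairwise_append.mpr
      refine ⟨?_, ?_, ?_⟩
      · apply List.pairwise_append.mpr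
        refine ⟨?_, List.isChain_iff_pairwise.mp hch, ?_⟩
        · split <;> simp
        · intro x hx y hy
          split at hx <;> simp at hx
          subst hx; exact (hIoo y hy).1
      · split <;> simp
      · intro x hx y hy
        split at hy <;> simp at hy
        subst hy
        simp only [List.mem_append] at hx
        rcases hx with hx | hx
        · split at hx <;> simp at hx; subst hx; exact hab
        · exact (hIoo x hx).2
    have hLlen : L.length = (if 0 < i then 1 else 0) + l.length + (if 0 < j then 1 else 0) := by
      rw [hL]; simp; split <;> split <;> simp <;> omega
    -- L is nonempty
    match hLeq : L, hLlen with
    | [], hll => simp at hll; split at hll <;> split at hll <;> omega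
    | u :: L₁, hll =>
      obtain ⟨l', hlen', hch', hprop'⟩ := rolleList hcont L₁ u (hLeq ▸ hLch)
        (hLeq ▸ hLmem) (hLeq ▸ hLz)
      have hIoo' : ∀ x ∈ l', x ∈ Set.Ioo a b := fun x hx => (hprop' x hx).2.1
      have hz' : ∀ x ∈ l', e' x = 0 := by
        intro x hx
        rw [he', derivWithin_of_mem_nhds (Icc_mem_nhds (hIoo' x hx).1 (hIoo' x hx).2)]
        exact (hprop' x hx).2.2
      have ha' : ∀ j' < i - 1, iteratedDerivWithin j' e' (Set.Icc a b) a = 0 := by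
        intro j' hj'
        rw [he', ← iteratedDerivWithin_succ']
        exact ha (j'+1) (by omega)
      have hb' : ∀ j' < j - 1, iteratedDerivWithin j' e' (Set.Icc a b) b = 0 := by
        intro j' hj'
        rw [he', ← iteratedDerivWithin_succ']
        exact hb (j'+1) (by omega)
      have hcount' : (i-1) + l'.length + (j-1) = n + 1 := by
        have : (u :: L₁).length = (if 0 < i then 1 else 0) + l.length + (if 0 < j then 1 else 0) := hll
        simp at this
        split at this <;> split at this <;> omega
      obtain ⟨ξ, hξ, hξ0⟩ := IH e' hcd' (i-1) (j-1) l' hch' hIoo' hcount' ha' hz' hb'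
      refine ⟨ξ, hξ, ?_⟩
      rw [iteratedDerivWithin_succ']
      exact hξ0

lemma key_sign {a b : ℝ} (hab : a < b) {n p q : ℕ} (hpq : p + q = n) (hp : 1 ≤ p) (hq : 1 ≤ q)
    {f Q : ℝ → ℝ} (hf : ContDiffOn ℝ n f (Set.Icc a b)) (hQ : ContDiff ℝ ⊤ Q)
    (hconv : ∀ x ∈ Set.Icc a b, 0 ≤ iteratedDerivWithin n f (Set.Icc a b) x)
    (hQn : iteratedDeriv n Q = fun _ => 0)
    (hQa : ∀ j < p, iteratedDeriv j Q a = iteratedDerivWithin j f (Set.Icc a b) a)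
    (hQb : ∀ j < q, iteratedDeriv j Q b = iteratedDerivWithin j f (Set.Icc a b) b) :
    ∀ x ∈ Set.Icc a b, ∃ c : ℝ, 0 ≤ c ∧ f x - Q x = c * ((x-a)^p * (x-b)^q) := by
  intro x hx
  have huniq : UniqueDiffOn ℝ (Set.Icc a b) := uniqueDiffOn_Icc hab
  have hamem : a ∈ Set.Icc a b := Set.left_mem_Icc.mpr hab.le
  have hbmem : b ∈ Set.Icc a b := Set.right_mem_Icc.mpr hab.le
  rcases eq_or_lt_of_le hx.1 with rfl | hax
  · refine ⟨0, le_refl _, ?_⟩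
    have h0 := hQa 0 hp
    simp only [iteratedDeriv_zero, iteratedDerivWithin_zero] at h0
    rw [h0]
    simp [zero_pow (by omega : p ≠ 0)]
  rcases eq_or_lt_of_le hx.2 with rfl | hxb
  · refine ⟨0, le_refl _, ?_⟩
    have h0 := hQb 0 hq
    simp only [iteratedDeriv_zero, iteratedDerivWithin_zero] at h0
    rw [h0]
    simp [zero_pow (by omega : q ≠ 0)]
  -- interior case
  set ρ : ℝ → ℝ := fun y => (y-a)^p * (y-b)^q with hρ
  have hρx : ρ x ≠ 0 := by
    apply mul_ne_zero
    · exact pow_ne_zero _ (by linarith)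
    · exact pow_ne_zero _ (by intro h0; have := sub_eq_zero.mp h0; linarith)
  set c : ℝ := (f x - Q x) / ρ x with hc
  set Q' : ℝ → ℝ := fun y => Q y + c * ρ y with hQ'
  have hgc : ContDiff ℝ ⊤ (fun y : ℝ => c * ρ y) := contDiff_const.mul (contDiff_phi a b p q)
  have hQ'c : ContDiff ℝ ⊤ Q' := by rw [hQ']; exact hQ.add hgc
  have hiDQ' : ∀ j, iteratedDeriv j Q' = fun y => iteratedDeriv j Q y + c * iteratedDeriv j ρ y := by
    intro j
    rw [hQ', iD_add j hQ hgc, iD_const_mul j c (contDiff_phi a b p q)]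
  set e : ℝ → ℝ := fun y => f y - Q' y with he
  have hecd : ContDiffOn ℝ n e (Set.Icc a b) := hf.sub (hQ'c.of_le le_top).contDiffOn
  have hesub : ∀ j ≤ n, ∀ y ∈ Set.Icc a b,
      iteratedDerivWithin j e (Set.Icc a b) y
        = iteratedDerivWithin j f (Set.Icc a b) y - iteratedDeriv j Q' y :=
    fun j hj y hy => iDW_sub_poly huniq hf hQ'c j hj y hy
  have hea : ∀ j' < p, iteratedDerivWithin j' e (Set.Icc a b) a = 0 := by
    intro j hj
    rw [hesub j (by omega) a hamem, hiDQ' j]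
    show iteratedDerivWithin j f (Set.Icc a b) a - (iteratedDeriv j Q a + c * iteratedDeriv j ρ a) = 0
    rw [hQa j hj, hρ, iD_phi_left a b p q j hj]
    ring
  have heb : ∀ j' < q, iteratedDerivWithin j' e (Set.Icc a b) b = 0 := by
    intro j hj
    rw [hesub j (by omega) b hbmem, hiDQ' j]
    show iteratedDerivWithin j f (Set.Icc a b) b - (iteratedDeriv j Q b + c * iteratedDeriv j ρ b) = 0
    rw [hQb j hj, hρ, iD_phi_right a b p q j hj]
    ring
  have hex : e x = 0 := by
    rw [he, hQ', hc]
    field_simp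
    ring
  obtain ⟨ξ, hξ, hξ0⟩ := rolle_config hab n e hecd p q [x]
    (List.isChain_singleton x) (by intro y hy; simp at hy; subst hy; exact ⟨hax, hxb⟩)
    (by simp; omega)
    hea (by intro y hy; simp at hy; subst hy; exact hex) heb
  have hfinal : iteratedDerivWithin n f (Set.Icc a b) ξ = c * (n.factorial : ℝ) := by
    have h1 := hesub n (le_refl n) ξ hξ
    rw [hξ0] at h1
    have h2 : iteratedDeriv n Q' ξ = c * (n.factorial : ℝ) := by
      rw [hiDQ' n]
      show iteratedDeriv n Q ξ + c * iteratedDeriv n ρ ξ = c * (n.factorial : ℝ)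
      rw [hQn, hρ]
      have h3 := iD_phi_top a b p q
      rw [hpq] at h3
      rw [h3]
      simp
    linarith [h1, h2]
  have hc0 : 0 ≤ c := by
    have := hconv ξ hξ
    rw [hfinal] at this
    have hfacpos : (0:ℝ) < (n.factorial : ℝ) := by exact_mod_cast n.factorial_pos
    nlinarith
  refine ⟨c, hc0, ?_⟩
  rw [hc]
  field_simp
  simp only [hρ]; ring

lemma divDiff_single (s : Set ℝ) (f : ℝ → ℝ) (x : ℝ) : divDiff s f [x] = f x := by
  simp [divDiff]

lemma divDiff_cons (s : Set ℝ) (f : ℝ → ℝ) (x y : ℝ) (l : List ℝ) :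
    divDiff s f (x :: y :: l) =
    if x = (y :: l).getLast (List.cons_ne_nil y l) then
      iteratedDerivWithin (l.length + 1) f s x / Nat.factorial (l.length + 1)
    else
      (divDiff s f (y :: l) - divDiff s f (x :: (y :: l).dropLast)) /
        ((y :: l).getLast (List.cons_ne_nil y l) - x) := by
  rw [divDiff]

lemma divDiff_replicate (s : Set ℝ) (f : ℝ → ℝ) (c : ℝ) (k : ℕ) :
    divDiff s f (List.replicate (k+1) c) = iteratedDerivWithin k f s c / k.factorial := by
  cases k with
  | zero => simp [divDiff]
  | succ k =>
    have h : List.replicate (k+2) c = c :: c :: List.replicate k c := rfl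
    rw [h, divDiff_cons]
    have hlast : (c :: List.replicate k c).getLast (List.cons_ne_nil c _) = c := by
      apply List.eq_of_mem_replicate (n := k+1)
      have : (c :: List.replicate k c) = List.replicate (k+1) c := rfl
      rw [← this]
      exact List.getLast_mem _
    rw [if_pos hlast.symm]
    simp

lemma two_blocks_cons (a b : ℝ) (p q : ℕ) :
    List.replicate (p+1) a ++ List.replicate q b = a :: (List.replicate p a ++ List.replicate q b) := rfl

lemma two_blocks_getLast (a b : ℝ) (p q : ℕ) (h : List.replicate p a ++ List.replicate (q+1) b ≠ []) :
    (List.replicate p a ++ List.replicate (q+1) b).getLast h = b := by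
  have h1 : List.replicate p a ++ List.replicate (q+1) b
      = (List.replicate p a ++ List.replicate q b) ++ [b] := by
    rw [List.replicate_succ' (n := q) (a := b), List.append_assoc]
  rw [List.getLast_congr _ _ h1]
  exact List.getLast_append_singleton _

lemma two_blocks_dropLast (a b : ℝ) (p q : ℕ) :
    (List.replicate p a ++ List.replicate (q+1) b).dropLast
      = List.replicate p a ++ List.replicate q b := by
  rw [List.replicate_succ' (n := q) (a := b), ← List.append_assoc]
  exact List.dropLast_concat

lemma divDiff_two_blocks (s : Set ℝ) (f : ℝ → ℝ) {a b : ℝ} (hab : a ≠ b) (p q : ℕ) :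
    divDiff s f (List.replicate (p+1) a ++ List.replicate (q+1) b)
      = (divDiff s f (List.replicate p a ++ List.replicate (q+1) b)
        - divDiff s f (List.replicate (p+1) a ++ List.replicate q b)) / (b - a) := by
  rw [two_blocks_cons]
  have hne : List.replicate p a ++ List.replicate (q+1) b ≠ [] := by simp
  obtain ⟨y, l, hyl⟩ := List.exists_cons_of_ne_nil hne
  rw [hyl, divDiff_cons]
  have hlast : (y :: l).getLast (List.cons_ne_nil y l) = b := by
    rw [← List.getLast_congr _ _ hyl]
    exact two_blocks_getLast a b p q hne
  rw [if_neg (by rw [hlast]; exact hab)]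
  rw [hlast, ← hyl, two_blocks_dropLast a b p q, ← two_blocks_cons]

section palindrome
variable (a b : ℝ) (ca cb : ℕ → ℝ) (D : ℕ → ℕ → ℝ)

def NN (p q : ℕ) (x : ℝ) : ℝ :=
  (∑ j ∈ Finset.range p, ca j * (x-a)^j)
    + ∑ k ∈ Finset.Icc 1 q, D p k * ((x-a)^p * (x-b)^(k-1))

def MM (q p : ℕ) (x : ℝ) : ℝ :=
  (∑ j ∈ Finset.range q, cb j * (x-b)^j)
    + ∑ k ∈ Finset.Icc 1 p, D k q * ((x-b)^q * (x-a)^(k-1))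

lemma NN_succ_q (p q : ℕ) (x : ℝ) :
    NN a b ca D p (q+1) x = NN a b ca D p q x + D p (q+1) * ((x-a)^p * (x-b)^q) := by
  unfold NN
  rw [Finset.sum_Icc_succ_top (by omega : 1 ≤ q+1)]
  simp only [Nat.add_sub_cancel]
  ring

lemma MM_succ_p (q p : ℕ) (x : ℝ) :
    MM a b cb D q (p+1) x = MM a b cb D q p x + D (p+1) q * ((x-b)^q * (x-a)^p) := by
  unfold MM
  rw [Finset.sum_Icc_succ_top (by omega : 1 ≤ p+1)]
  simp only [Nat.add_sub_cancel]
  ring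

lemma NN_succ_p (p : ℕ) (x : ℝ) :
    NN a b ca D (p+1) 0 x = NN a b ca D p 0 x + ca p * (x-a)^p := by
  unfold NN
  simp [Finset.sum_range_succ]

lemma palindrome (hab : a ≠ b)
    (hD0 : ∀ p, D (p+1) 0 = ca p)
    (h0D : ∀ q, D 0 (q+1) = cb q)
    (hrec : ∀ p q, D (p+1) (q+1) = (D p (q+1) - D (p+1) q) / (b - a)) :
    ∀ p q x, NN a b ca D p q x = MM a b cb D q p x := by
  have hbase_q : ∀ q x, NN a b ca D 0 q x = MM a b cb D q 0 x := by
    intro q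
    induction q with
    | zero => intro x; simp [NN, MM]
    | succ q ih =>
      intro x
      rw [NN_succ_q]
      unfold MM
      rw [Finset.sum_range_succ]
      unfold MM at ih
      rw [ih]
      simp [h0D q]
      try ring
  have hbase_p : ∀ p x, NN a b ca D p 0 x = MM a b cb D 0 p x := by
    intro p
    induction p with
    | zero => intro x; simp [NN, MM]
    | succ p ih =>
      intro x
      rw [NN_succ_p, MM_succ_p, ih]
      rw [hD0 p]
      ring
  -- strong induction on p + q
  suffices H : ∀ t p q, p + q = t → ∀ x, NN a b ca D p q x = MM a b cb D q p x by
    intro p q; exact H (p+q) p q rfl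
  intro t
  induction t using Nat.strong_induction_on with
  | _ t IH =>
    intro p q ht x
    rcases p with _ | p
    · exact hbase_q q x
    rcases q with _ | q
    · exact hbase_p (p+1) x
    · 
      have hrec' : D p (q+1) - D (p+1) q = (b - a) * D (p+1) (q+1) := by
        have hba : b - a ≠ 0 := sub_ne_zero.mpr (fun h => hab h.symm)
        rw [hrec p q]
        field_simp
      have e1 : NN a b ca D (p+1) (q+1) x
          = NN a b ca D (p+1) q x + D (p+1) (q+1) * ((x-a)^(p+1) * (x-b)^q) := NN_succ_q _ _ _ _ _ _ _
      have e2 : MM a b cb D (q+1) (p+1) x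
          = MM a b cb D (q+1) p x + D (p+1) (q+1) * ((x-b)^(q+1) * (x-a)^p) := MM_succ_p _ _ _ _ _ _ _
      have e3 : NN a b ca D (p+1) q x = MM a b cb D q (p+1) x := by
        exact IH (p+1+q) (by omega) _ _ rfl x
      have e4 : MM a b cb D q (p+1) x
          = MM a b cb D q p x + D (p+1) q * ((x-b)^q * (x-a)^p) := MM_succ_p _ _ _ _ _ _ _
      have e5 : NN a b ca D p (q+1) x = MM a b cb D (q+1) p x := by
        exact IH (p+(q+1)) (by omega) _ _ rfl x
      have e6 : NN a b ca D p (q+1) x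
          = NN a b ca D p q x + D p (q+1) * ((x-a)^p * (x-b)^q) := NN_succ_q _ _ _ _ _ _ _
      have e7 : NN a b ca D p q x = MM a b cb D q p x := by
        exact IH (p+q) (by omega) _ _ rfl x
      rw [e1, e2, e3, e4]
      rw [← e5, e6, e7]
      rw [show (x-a)^(p+1) = (x-a)^p * (x-a) by ring, show (x-b)^(q+1) = (x-b)^q * (x-b) by ring]
      linear_combination (-((x-a)^p * (x-b)^q)) * hrec'
  
end palindrome

lemma NN_contDiff (a b : ℝ) (ca : ℕ → ℝ) (D : ℕ → ℕ → ℝ) (p q : ℕ) :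
    ContDiff ℝ ⊤ (fun x => NN a b ca D p q x) := by
  unfold NN
  apply ContDiff.add
  · apply ContDiff.sum
    intro i _
    exact contDiff_const.mul (contDiff_sub_pow a i)
  · apply ContDiff.sum
    intro k _
    exact contDiff_const.mul ((contDiff_sub_pow a p).mul (contDiff_sub_pow b (k-1)))

lemma iD_NN (a b : ℝ) (ca : ℕ → ℝ) (D : ℕ → ℕ → ℝ) (p q j : ℕ) :
    iteratedDeriv j (fun x => NN a b ca D p q x)
      = fun x => (∑ i ∈ Finset.range p,
            ca i * ((i.descFactorial j : ℝ) * (x - a)^(i-j)))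
        + ∑ k ∈ Finset.Icc 1 q,
            D p k * iteratedDeriv j (fun x => (x-a)^p * (x-b)^(k-1)) x := by
  unfold NN
  rw [iD_add j (by apply ContDiff.sum; intro i _; exact contDiff_const.mul (contDiff_sub_pow a i))
      (by apply ContDiff.sum; intro k _;
          exact contDiff_const.mul ((contDiff_sub_pow a p).mul (contDiff_sub_pow b (k-1))))]
  funext x
  congr 1
  · rw [iD_fun_sum _ _ (fun i _ => contDiff_const.mul (contDiff_sub_pow a i)) j]
    apply Finset.sum_congr rfl
    intro i _
    rw [iD_const_mul j (ca i) (contDiff_sub_pow a i), iD_monomial]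
  · rw [iD_fun_sum _ _ (fun k _ =>
      contDiff_const.mul ((contDiff_sub_pow a p).mul (contDiff_sub_pow b (k-1)))) j]
    apply Finset.sum_congr rfl
    intro k _
    rw [iD_const_mul j (D p k) ((contDiff_sub_pow a p).mul (contDiff_sub_pow b (k-1)))]

lemma iD_NN_at_a (a b : ℝ) (ca : ℕ → ℝ) (D : ℕ → ℕ → ℝ) (p q j : ℕ) (hj : j < p) :
    iteratedDeriv j (fun x => NN a b ca D p q x) a = ca j * (j.factorial : ℝ) := by
  rw [iD_NN]
  beta_reduce
  have h2 : ∑ k ∈ Finset.Icc 1 q,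
      D p k * iteratedDeriv j (fun x => (x-a)^p * (x-b)^(k-1)) a = 0 := by
    apply Finset.sum_eq_zero
    intro k _
    rw [iD_phi_left a b p (k-1) j hj]
    ring
  rw [h2]
  rw [Finset.sum_eq_single j]
  · simp [Nat.descFactorial_self]
  · intro i hi hne
    rcases lt_or_gt_of_ne hne with h | h
    · rw [Nat.descFactorial_eq_zero_iff_lt.mpr h]; push_cast; ring
    · rw [sub_self, zero_pow (by omega : i - j ≠ 0)]; ring
  · intro h; simp at h; omega

lemma iD_NN_top (a b : ℝ) (ca : ℕ → ℝ) (D : ℕ → ℕ → ℝ) (p q n : ℕ)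
    (hp : p ≤ n) (hpq : p + q ≤ n) (hq1 : 1 ≤ q) :
    iteratedDeriv n (fun x => NN a b ca D p q x) = fun _ => 0 := by
  rw [iD_NN]
  funext x
  have h1 : ∑ i ∈ Finset.range p, ca i * ((i.descFactorial n : ℝ) * (x - a)^(i-n)) = 0 := by
    apply Finset.sum_eq_zero
    intro i hi
    simp at hi
    rw [Nat.descFactorial_eq_zero_iff_lt.mpr (by omega)]
    push_cast; ring
  have h2 : ∑ k ∈ Finset.Icc 1 q,
      D p k * iteratedDeriv n (fun x => (x-a)^p * (x-b)^(k-1)) x = 0 := by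
    apply Finset.sum_eq_zero
    intro k hk
    simp at hk
    rw [iD_phi_gt a b p (k-1) n (by omega)]
    ring
  rw [h1, h2]
  ring

/-- Theorem 2.1: Edmundson–Lah–Ribarič type upper bound for `n`-convex functions,
`3 ≤ m ≤ n-1`; the inequality holds when `n` and `m` have different parity and is
reversed when they have equal parity. -/
theorem thm21 {E : Type*} [Nonempty E]
    (a b : ℝ) (hab : a < b) (n m : ℕ) (hm : 3 ≤ m) (hmn : m + 1 ≤ n)
    (f : ℝ → ℝ) (hf : ContDiffOn ℝ n f (Set.Icc a b))
    (hconv : ∀ x ∈ Set.Icc a b, 0 ≤ iteratedDerivWithin n f (Set.Icc a b) x)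
    (A : (E → ℝ) →ₗ[ℝ] ℝ)
    (hApos : ∀ h : E → ℝ, (∀ t, 0 ≤ h t) → 0 ≤ A h)
    (hA1 : A (fun _ => (1 : ℝ)) = 1)
    (g : E → ℝ) (hg : ∀ t, g t ∈ Set.Icc a b) :
    (¬ n % 2 = m % 2 →
      A (fun t => f (g t)) - (b - A g) / (b - a) * f a - (A g - a) / (b - a) * f b ≤
        (A g - a) * (divDiff (Set.Icc a b) f [a, a] - divDiff (Set.Icc a b) f [a, b]) +
        (∑ k ∈ Finset.Icc 2 (m - 1),
          iteratedDerivWithin k f (Set.Icc a b) a / Nat.factorial k *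
            A (fun t => (g t - a) ^ k)) +
        ∑ k ∈ Finset.Icc 1 (n - m),
          divDiff (Set.Icc a b) f (List.replicate m a ++ List.replicate k b) *
            A (fun t => (g t - a) ^ m * (g t - b) ^ (k - 1))) ∧
    (n % 2 = m % 2 →
      (A g - a) * (divDiff (Set.Icc a b) f [a, a] - divDiff (Set.Icc a b) f [a, b]) +
        (∑ k ∈ Finset.Icc 2 (m - 1),
          iteratedDerivWithin k f (Set.Icc a b) a / Nat.factorial k *
            A (fun t => (g t - a) ^ k)) +
        (∑ k ∈ Finset.Icc 1 (n - m),
          divDiff (Set.Icc a b) f (List.replicate m a ++ List.replicate k b) *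
            A (fun t => (g t - a) ^ m * (g t - b) ^ (k - 1))) ≤
      A (fun t => f (g t)) - (b - A g) / (b - a) * f a - (A g - a) / (b - a) * f b) := by
  have habne : a ≠ b := ne_of_lt hab
  have hba : b - a ≠ 0 := sub_ne_zero.mpr habne.symm
  set s := Set.Icc a b with hs
  set q := n - m with hqdef
  have hq1 : 1 ≤ q := by omega
  have hmq : m + q = n := by omega
  set ca : ℕ → ℝ := fun j => iteratedDerivWithin j f s a / j.factorial with hca
  set cb : ℕ → ℝ := fun j => iteratedDerivWithin j f s b / j.factorial with hcb
  set D : ℕ → ℕ → ℝ := fun p k => divDiff s f (List.replicate p a ++ List.replicate k b) with hD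
  have hD0 : ∀ p, D (p+1) 0 = ca p := by
    intro p
    show divDiff s f (List.replicate (p+1) a ++ List.replicate 0 b) = ca p
    rw [show List.replicate (p+1) a ++ List.replicate 0 b = List.replicate (p+1) a by simp,
      divDiff_replicate]
  have h0D : ∀ k, D 0 (k+1) = cb k := by
    intro k
    show divDiff s f (List.replicate 0 a ++ List.replicate (k+1) b) = cb k
    rw [show List.replicate 0 a ++ List.replicate (k+1) b = List.replicate (k+1) b by simp,
      divDiff_replicate]
  have hrec : ∀ p k, D (p+1) (k+1) = (D p (k+1) - D (p+1) k) / (b - a) := by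
    intro p k
    exact divDiff_two_blocks s f habne p k
  -- the Newton polynomial
  set Q : ℝ → ℝ := fun x => NN a b ca D m q x with hQdef
  set E' : ℕ → ℕ → ℝ := fun k p => D p k with hE'
  have hpal : Q = fun x => NN b a cb E' q m x := by
    funext x
    have h1 := palindrome a b ca cb D habne hD0 h0D hrec m q x
    show NN a b ca D m q x = NN b a cb E' q m x
    rw [h1]
    rfl
  have hQa : ∀ j < m, iteratedDeriv j Q a = iteratedDerivWithin j f s a := by
    intro j hj
    rw [hQdef, iD_NN_at_a a b ca D m q j hj, hca]
    field_simp
  have hQb : ∀ j < q, iteratedDeriv j Q b = iteratedDerivWithin j f s b := by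
    intro j hj
    rw [hpal, iD_NN_at_a b a cb E' q m j hj, hcb]
    field_simp
  have hQn : iteratedDeriv n Q = fun _ => 0 := by
    rw [hQdef]
    exact iD_NN_top a b ca D m q n (by omega) (by omega) hq1
  have hkey := key_sign hab hmq (by omega) hq1 hf
    (NN_contDiff a b ca D m q) hconv hQn hQa hQb
  -- pointwise inequalities
  have hptle : (q % 2 = 1) → ∀ x ∈ s, f x ≤ Q x := by
    intro hodd x hx
    obtain ⟨c, hc0, hceq⟩ := hkey x hx
    have h1 : (0:ℝ) ≤ (x - a)^m := pow_nonneg (by linarith [hx.1]) m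
    have h2 : (x - b)^q ≤ 0 := Odd.pow_nonpos (Nat.odd_iff.mpr hodd) (by linarith [hx.2])
    have h4 : Q x = NN a b ca D m q x := rfl
    nlinarith [mul_nonneg hc0 (mul_nonneg h1 (neg_nonneg.mpr h2))]
  have hptge : (q % 2 = 0) → ∀ x ∈ s, Q x ≤ f x := by
    intro heven x hx
    obtain ⟨c, hc0, hceq⟩ := hkey x hx
    have h1 : (0:ℝ) ≤ (x - a)^m := pow_nonneg (by linarith [hx.1]) m
    have h2 : (0:ℝ) ≤ (x - b)^q := Even.pow_nonneg (Nat.even_iff.mpr heven) _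
    have h3 := mul_nonneg hc0 (mul_nonneg h1 h2)
    have h4 : Q x = NN a b ca D m q x := rfl
    linarith
  -- A of constants
  have hAconst : ∀ c : ℝ, A (fun _ => c) = c := by
    intro c
    have h1 : (fun _ : E => c) = c • (fun _ : E => (1:ℝ)) := by funext t; simp
    rw [h1, map_smul, hA1, smul_eq_mul, mul_one]
  -- A applied to the Newton polynomial composed with g
  have hAQ : A (fun t => Q (g t)) =
      (∑ j ∈ Finset.range m, ca j * A (fun t => (g t - a)^j))
        + ∑ k ∈ Finset.Icc 1 q, D m k * A (fun t => (g t - a)^m * (g t - b)^(k-1)) := by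
    have h1 : (fun t => Q (g t)) =
        (∑ j ∈ Finset.range m, ca j • (fun t => (g t - a)^j))
          + (∑ k ∈ Finset.Icc 1 q, D m k • fun t => (g t - a)^m * (g t - b)^(k-1)) := by
      funext t
      simp only [hQdef, NN, Pi.add_apply, Finset.sum_apply, Pi.smul_apply, smul_eq_mul]
      try ring
    rw [h1, map_add, map_sum, map_sum]
    simp only [map_smul, smul_eq_mul]
  have hA0 : A (fun t => (g t - a)^0) = 1 := by
    rw [show (fun t => (g t - a)^0) = fun _ : E => (1:ℝ) by funext t; simp]
    exact hA1
  have hA1' : A (fun t => (g t - a)^1) = A g - a := by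
    have h1 : (fun t => (g t - a)^1) = g - a • (fun _ : E => (1:ℝ)) := by
      funext t; simp
    rw [h1, map_sub, map_smul, hA1, smul_eq_mul, mul_one]
  have hsplit : ∑ j ∈ Finset.range m, ca j * A (fun t => (g t - a)^j)
      = ca 0 + ca 1 * (A g - a)
        + ∑ j ∈ Finset.Icc 2 (m-1), ca j * A (fun t => (g t - a)^j) := by
    rw [Finset.range_eq_Ico, ← Finset.sum_Ico_consecutive _ (by omega : 0 ≤ 2) (by omega : 2 ≤ m)]
    have h2 : Finset.Ico 2 m = Finset.Icc 2 (m-1) := by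
      ext x
      simp only [Finset.mem_Ico, Finset.mem_Icc]
      omega
    have h3 : Finset.Ico 0 2 = ({0, 1} : Finset ℕ) := by decide
    rw [h2, h3]
    rw [Finset.sum_pair (by omega : (0:ℕ) ≠ 1)]
    rw [hA0, hA1']
    ring
  -- values of small divided differences
  have hdd_aa : divDiff s f [a, a] = iteratedDerivWithin 1 f s a := by
    rw [show [a,a] = List.replicate 2 a by rfl, divDiff_replicate]
    simp
  have hdd_ab : divDiff s f [a, b] = (f b - f a) / (b - a) := by
    rw [divDiff_cons]
    rw [if_neg (by simpa using habne)]
    simp [divDiff_single]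
  have hca1 : ca 1 = iteratedDerivWithin 1 f s a := by rw [hca]; simp
  have hca0 : ca 0 = f a := by rw [hca]; simp
  -- the main equality between A(Q∘g) and the right-hand side
  have hmain : A (fun t => Q (g t)) - (b - A g) / (b - a) * f a - (A g - a) / (b - a) * f b
      = (A g - a) * (divDiff s f [a, a] - divDiff s f [a, b]) +
        (∑ k ∈ Finset.Icc 2 (m - 1),
          iteratedDerivWithin k f s a / Nat.factorial k * A (fun t => (g t - a) ^ k)) +
        ∑ k ∈ Finset.Icc 1 (n - m),
          divDiff s f (List.replicate m a ++ List.replicate k b) *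
            A (fun t => (g t - a) ^ m * (g t - b) ^ (k - 1)) := by
    rw [hAQ, hsplit, hdd_aa, hdd_ab, hca0, hca1]
    have hsum1 : ∑ k ∈ Finset.Icc 2 (m - 1),
        iteratedDerivWithin k f s a / Nat.factorial k * A (fun t => (g t - a) ^ k)
        = ∑ j ∈ Finset.Icc 2 (m-1), ca j * A (fun t => (g t - a)^j) := by
      apply Finset.sum_congr rfl
      intro k _
      rw [hca]
    have hsum2 : ∑ k ∈ Finset.Icc 1 (n - m),
        divDiff s f (List.replicate m a ++ List.replicate k b) *
          A (fun t => (g t - a) ^ m * (g t - b) ^ (k - 1))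
        = ∑ k ∈ Finset.Icc 1 q, D m k * A (fun t => (g t - a)^m * (g t - b)^(k-1)) := by
      apply Finset.sum_congr (by rw [hqdef]) (fun k _ => by rw [hD])
    rw [hsum1, hsum2]
    field_simp
    try ring
  -- monotonicity of A
  have hmono_le : ((q % 2 = 1)) → A (fun t => f (g t)) ≤ A (fun t => Q (g t)) := by
    intro hodd
    have h1 : (0:ℝ) ≤ A ((fun t => Q (g t)) - (fun t => f (g t))) := by
      apply hApos
      intro t
      simp only [Pi.sub_apply]
      have := hptle hodd (g t) (hg t)
      linarith
    rw [map_sub] at h1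
    linarith
  have hmono_ge : ((q % 2 = 0)) → A (fun t => Q (g t)) ≤ A (fun t => f (g t)) := by
    intro heven
    have h1 : (0:ℝ) ≤ A ((fun t => f (g t)) - (fun t => Q (g t))) := by
      apply hApos
      intro t
      simp only [Pi.sub_apply]
      have := hptge heven (g t) (hg t)
      linarith
    rw [map_sub] at h1
    linarith
  constructor
  · intro hne
    have hodd : q % 2 = 1 := by omega
    have := hmono_le hodd
    rw [← hmain]
    linarith
  · intro heq
    have heven : q % 2 = 0 := by omega
    have := hmono_ge heven
    rw [← hmain]
    linarith
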